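/- Let F ⊆ binom([n],k) be an initial t-intersecting family, and let P ⊆ [t+1] with |P| ≤ t−1. Then the family F(P,[t+1]) = {A \ [t+1] : A ∈ F, A ∩ [t+1] = P} is (1 + 2(t − |P|))-intersecting. -/

import Mathlib

lemma list_forall2_of_count (l m : List ℕ) (hl : l.Pairwise (· ≤ ·)) (hm : m.Pairwise (· ≤ ·))
    (hlen : l.length = m.length)
    (hcount : ∀ x, (m.filter (· ≤ x)).length ≤ (l.filter (· ≤ x)).length) :
    List.Forall₂ (· ≤ ·) l m := by
  rw [List.forall₂_iff_get]
  refine ⟨hlen, fun i h₁ h₂ => ?_⟩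
  by_contra hlt
  push_neg at hlt
  set x := m.get ⟨i, h₂⟩ with hx
  have h1 : i + 1 ≤ (m.filter (· ≤ x)).length := by
    have hsub : (m.take (i+1)).filter (· ≤ x) = m.take (i+1) := by
      rw [List.filter_eq_self]
      intro a ha
      obtain ⟨j, hj1, rfl⟩ := List.mem_take_iff_getElem.1 ha
      simp only [decide_eq_true_eq]
      have hj' : j ≤ i := by omega
      rcases eq_or_lt_of_le hj' with h | h
      · subst h; simp [hx, List.get_eq_getElem]
      · have := (List.pairwise_iff_get.1 hm) ⟨j, by omega⟩ ⟨i, h₂⟩ h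
        simpa [hx, List.get_eq_getElem] using this
    have heq : m.filter (· ≤ x) = (m.take (i+1)).filter (· ≤ x) ++ (m.drop (i+1)).filter (· ≤ x) := by
      rw [← List.filter_append, List.take_append_drop]
    rw [heq, List.length_append, hsub, List.length_take]
    omega
  have h2 : (l.filter (· ≤ x)).length ≤ i := by
    have hnil : (l.drop i).filter (· ≤ x) = [] := by
      rw [List.filter_eq_nil_iff]
      intro a ha
      obtain ⟨j, hj, hj3⟩ := List.mem_iff_getElem.1 ha
      rw [List.getElem_drop] at hj3
      have hij : i + j < l.length := by
        have := List.length_drop (i := i) (l := l); omega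
      have hia : l.get ⟨i, h₁⟩ ≤ a := by
        rcases Nat.eq_zero_or_pos j with h | h
        · subst h; rw [← hj3]; simp [List.get_eq_getElem]
        · have := (List.pairwise_iff_get.1 hl) ⟨i, h₁⟩ ⟨i + j, hij⟩ (Fin.mk_lt_mk.2 (by omega))
          rw [← hj3]; simpa [List.get_eq_getElem] using this
      simp only [decide_eq_true_eq]
      exact fun hax => absurd (hlt.trans_le hia) (not_lt.2 hax)
    have heq : l.filter (· ≤ x) = (l.take i).filter (· ≤ x) ++ (l.drop i).filter (· ≤ x) := by
      rw [← List.filter_append, List.take_append_drop]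
    rw [heq, List.length_append, hnil]
    simp only [List.length_nil]
    have h3 := List.length_filter_le (fun a => decide (a ≤ x)) (l.take i)
    have h4 : (l.take i).length ≤ i := by simp [List.length_take]
    omega
  have := hcount x
  omega

def prec (A B : Finset ℕ) : Prop :=
  List.Forall₂ (· ≤ ·) (A.sort (· ≤ ·)) (B.sort (· ≤ ·))

lemma prec_of_count (S T : Finset ℕ) (hcard : S.card = T.card)
    (hc : ∀ x, (T.filter (· ≤ x)).card ≤ (S.filter (· ≤ x)).card) : prec S T := by
  apply list_forall2_of_count _ _ (Finset.pairwise_sort _ _) (Finset.pairwise_sort _ _)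
    (by rw [Finset.length_sort, Finset.length_sort, hcard])
  intro x
  have key : ∀ (U : Finset ℕ), ((U.sort (· ≤ ·)).filter (· ≤ x)).length
      = (U.filter (· ≤ x)).card := by
    intro U
    have h : ((U.sort (· ≤ ·)).filter (fun a => a ≤ x) : Multiset ℕ)
        = U.val.filter (fun a => a ≤ x) := by
      rw [← Multiset.filter_coe, Finset.sort_eq]
    calc ((U.sort (· ≤ ·)).filter (· ≤ x)).length
        = Multiset.card ((U.sort (· ≤ ·)).filter (fun a => a ≤ x) : Multiset ℕ) := rfl
      _ = Multiset.card (U.val.filter (fun a => a ≤ x)) := by rw [h]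
      _ = (U.filter (· ≤ x)).card := rfl
  rw [key, key]
  exact hc x

lemma prec_shift (B D E : Finset ℕ) (hD : D ⊆ B) (hE : Disjoint E B)
    (hcard : D.card = E.card) (u : ℕ) (hEle : ∀ e ∈ E, e ≤ u) (hDgt : ∀ d ∈ D, u < d) :
    prec ((B \ D) ∪ E) B := by
  have hdisj : Disjoint (B \ D) E := (hE.mono_right Finset.sdiff_subset).symm
  apply prec_of_count
  · rw [Finset.card_union_of_disjoint hdisj, Finset.card_sdiff_of_subset hD]
    have := Finset.card_le_card hD
    omega
  · intro x
    have hBsplit : B.filter (· ≤ x) = (B \ D).filter (· ≤ x) ∪ D.filter (· ≤ x) := by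
      rw [← Finset.filter_union, Finset.sdiff_union_of_subset hD]
    have hUsplit : ((B \ D) ∪ E).filter (· ≤ x) = (B \ D).filter (· ≤ x) ∪ E.filter (· ≤ x) :=
      Finset.filter_union _ _ _
    rw [hBsplit, hUsplit,
      Finset.card_union_of_disjoint ((Finset.disjoint_filter_filter (Finset.sdiff_disjoint))),
      Finset.card_union_of_disjoint ((Finset.disjoint_filter_filter hdisj))]
    have key : (D.filter (· ≤ x)).card ≤ (E.filter (· ≤ x)).card := by
      rcases le_or_gt u x with h | h
      · have : E.filter (· ≤ x) = E := Finset.filter_true_of_mem (fun e he => (hEle e he).trans h)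
        rw [this, ← hcard]
        exact Finset.card_le_card (Finset.filter_subset _ _)
      · have : D.filter (· ≤ x) = ∅ := by
          rw [Finset.filter_eq_empty_iff]
          exact fun d hd hdx => absurd (lt_of_lt_of_le (hDgt d hd) hdx) (not_lt.2 h.le)
        simp [this]
    omega

theorem stmt_14 (n k t : ℕ) (ht : 1 ≤ t) (F : Finset (Finset ℕ))
    (hsub : ∀ A ∈ F, A ⊆ Finset.Icc 1 n) (hcard : ∀ A ∈ F, A.card = k)
    (hinit : ∀ A B : Finset ℕ, A ⊆ Finset.Icc 1 n → prec A B → B ∈ F → A ∈ F)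
    (hint : ∀ A ∈ F, ∀ B ∈ F, t ≤ (A ∩ B).card)
    (P : Finset ℕ) (hP : P ⊆ Finset.Icc 1 (t + 1)) (hPcard : P.card ≤ t - 1) :
    ∀ A ∈ F, A ∩ Finset.Icc 1 (t + 1) = P → ∀ B ∈ F, B ∩ Finset.Icc 1 (t + 1) = P →
      1 + 2 * (t - P.card) ≤
        ((A \ Finset.Icc 1 (t + 1)) ∩ (B \ Finset.Icc 1 (t + 1))).card := by
  intro A hAF hA B hBF hB
  set I := Finset.Icc 1 (t + 1) with hI
  set C := (A \ I) ∩ (B \ I) with hC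
  have hpt : P.card + 1 ≤ t := by
    have := hPcard; omega
  have hIcard : I.card = t + 1 := by rw [hI, Nat.card_Icc]; omega
  have hIP : (I \ P).card = t + 1 - P.card := by rw [Finset.card_sdiff_of_subset hP, hIcard]
  -- |A ∩ B| = |P| + |C|
  have hABsplit : ((A ∩ B) ∩ I).card + ((A ∩ B) \ I).card = (A ∩ B).card :=
    Finset.card_inter_add_card_sdiff _ _
  have hABI : (A ∩ B) ∩ I = P := by
    rw [Finset.inter_inter_distrib_right, hA, hB, Finset.inter_self]
  have hABdiff : (A ∩ B) \ I = C := by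
    rw [hC]; ext x
    simp only [Finset.mem_sdiff, Finset.mem_inter]
    tauto
  have hAB : (A ∩ B).card = P.card + C.card := by
    rw [← hABsplit, hABI, hABdiff]
  have htAB : t ≤ (A ∩ B).card := hint A hAF B hBF
  have hCpos : 1 ≤ C.card := by omega
  set m := min C.card (t + 1 - P.card) with hm
  have hmpos : 1 ≤ m := by omega
  obtain ⟨E, hEsub, hEcard⟩ := Finset.exists_subset_card_eq (s := I \ P) (n := m) (by omega)
  obtain ⟨D, hDsub, hDcard⟩ := Finset.exists_subset_card_eq (s := C) (n := m) (by omega)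
  have hDB : D ⊆ B := fun d hd => (Finset.mem_sdiff.1 (Finset.mem_inter.1 (hDsub hd)).2).1
  have hDgt : ∀ d ∈ D, t + 1 < d := by
    intro d hd
    have hdB : d ∈ B := hDB hd
    have hd1 : 1 ≤ d := (Finset.mem_Icc.1 (hsub B hBF hdB)).1
    have hdI : d ∉ I := (Finset.mem_sdiff.1 (Finset.mem_inter.1 (hDsub hd)).2).2
    rw [hI, Finset.mem_Icc] at hdI
    omega
  have hEle : ∀ e ∈ E, e ≤ t + 1 := by
    intro e he
    exact (Finset.mem_Icc.1 (Finset.mem_sdiff.1 (hEsub he)).1).2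
  have hE1 : ∀ e ∈ E, 1 ≤ e := by
    intro e he
    exact (Finset.mem_Icc.1 (Finset.mem_sdiff.1 (hEsub he)).1).1
  have hEB : Disjoint E B := by
    rw [Finset.disjoint_left]
    intro e heE heB
    have heI : e ∈ I := (Finset.mem_sdiff.1 (hEsub heE)).1
    have : e ∈ P := by rw [← hB]; exact Finset.mem_inter.2 ⟨heB, heI⟩
    exact (Finset.mem_sdiff.1 (hEsub heE)).2 this
  -- n ≥ t + 2
  obtain ⟨d0, hd0⟩ := Finset.card_pos.1 (by omega : 0 < D.card)
  have hn : t + 2 ≤ n := by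
    have := (Finset.mem_Icc.1 (hsub B hBF (hDB hd0))).2
    have := hDgt d0 hd0
    omega
  set Bs := (B \ D) ∪ E with hBs
  have hBsSub : Bs ⊆ Finset.Icc 1 n := by
    intro x hx
    rcases Finset.mem_union.1 hx with h | h
    · exact hsub B hBF (Finset.mem_sdiff.1 h).1
    · rw [Finset.mem_Icc]
      exact ⟨hE1 x h, by have := hEle x h; omega⟩
  have hprec : prec Bs B :=
    prec_shift B D E hDB hEB (by omega) (t + 1) hEle hDgt
  have hBsF : Bs ∈ F := hinit Bs B hBsSub hprec hBF
  have htABs : t ≤ (A ∩ Bs).card := hint A hAF Bs hBsF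
  -- A ∩ Bs = (A ∩ B) \ D
  have hAE : A ∩ E = ∅ := by
    rw [Finset.eq_empty_iff_forall_notMem]
    intro e he
    obtain ⟨heA, heE⟩ := Finset.mem_inter.1 he
    have heI : e ∈ I := (Finset.mem_sdiff.1 (hEsub heE)).1
    have : e ∈ P := by rw [← hA]; exact Finset.mem_inter.2 ⟨heA, heI⟩
    exact (Finset.mem_sdiff.1 (hEsub heE)).2 this
  have hABs : A ∩ Bs = (A ∩ B) \ D := by
    rw [hBs, Finset.inter_union_distrib_left, hAE, Finset.union_empty,
      Finset.inter_sdiff_assoc]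
  have hDAB : D ⊆ A ∩ B := by
    intro d hd
    have := Finset.mem_inter.1 (hDsub hd)
    exact Finset.mem_inter.2 ⟨(Finset.mem_sdiff.1 this.1).1, (Finset.mem_sdiff.1 this.2).1⟩
  have hABsCard : (A ∩ Bs).card = (A ∩ B).card - D.card := by
    rw [hABs, Finset.card_sdiff_of_subset hDAB]
  have hDle := Finset.card_le_card hDAB
  rw [hABsCard] at htABs
  omega
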